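/- Define B : ℤ² × ℤ² → ℤ by B((x,y),(u,v)) = u·y + v·x if v ≥ 0, and B((x,y),(u,v)) = u·y − v·(min(0,y) − x) if v ≤ 0. Then B is symmetric: B((x,y),(u,v)) = B((u,v),(x,y)) for all (x,y),(u,v) ∈ ℤ². -/
import Mathlib

theorem stmt1 (B : ℤ × ℤ → ℤ × ℤ → ℤ)
    (h1 : ∀ x y u v : ℤ, 0 ≤ v → B (x, y) (u, v) = u * y + v * x)
    (h2 : ∀ x y u v : ℤ, v ≤ 0 → B (x, y) (u, v) = u * y - v * (min 0 y - x)) :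
    ∀ a b : ℤ × ℤ, B a b = B b a := by
  rintro ⟨x, y⟩ ⟨u, v⟩
  rcases le_total 0 v with hv | hv <;> rcases le_total 0 y with hy | hy
  · rw [h1 x y u v hv, h1 u v x y hy]; ring
  · rw [h1 x y u v hv, h2 u v x y hy, min_eq_left hv]; ring
  · rw [h2 x y u v hv, h1 u v x y hy, min_eq_left hy]; ring
  · rw [h2 x y u v hv, h2 u v x y hy, min_eq_right hy, min_eq_right hv]; ring
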